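/- FKG-type inequality for partial sums (Lemma 4.4 of the paper): Let k ≥ 1 and let f₁, f₂ : ℝ^k → [0,∞) be bounded measurable functions. For i ∈ {1,2} define f̃ᵢ(u₁,…,u_k) := fᵢ(u₁, u₁+u₂, …, u₁+⋯+u_k). If f̃₁ and f̃₂ are both nondecreasing with respect to the coordinatewise partial order on ℝ^k (that is, sⱼ ≤ tⱼ for all j ≤ k implies f̃ᵢ(s) ≤ f̃ᵢ(t)), then E[f₁(S₁,S₂,…,S_k)·f₂(S₁,S₂,…,S_k)] ≥ E[f₁(S₁,S₂,…,S_k)]·E[f₂(S₁,S₂,…,S_k)]. -/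

import Mathlib

open MeasureTheory ProbabilityTheory Filter Finset Real

noncomputable section

variable {Ω : Type*} [MeasurableSpace Ω]

/-- Partial sums: `pSum X n = X 0 + ⋯ + X (n-1)` (the walk `S_n`). -/
def pSum (X : ℕ → Ω → ℝ) (n : ℕ) (ω : Ω) : ℝ := ∑ i ∈ Finset.range n, X i ω

/-- Running maximum `S̄_n = max_{1 ≤ m ≤ n} S_m`. -/
def pMax (X : ℕ → Ω → ℝ) (n : ℕ) (ω : Ω) : ℝ := ⨆ j : Fin n, pSum X (j.1 + 1) ω

/-- Running minimum `S̲_n = min_{1 ≤ m ≤ n} S_m`. -/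
def pMin (X : ℕ → Ω → ℝ) (n : ℕ) (ω : Ω) : ℝ := ⨅ j : Fin n, pSum X (j.1 + 1) ω

/-- `τ_a = inf {k ≥ 1 : S_k ≥ a}`. -/
def tauGe (X : ℕ → Ω → ℝ) (a : ℝ) (ω : Ω) : ℕ := sInf {k | 1 ≤ k ∧ a ≤ pSum X k ω}

/-- `τ_a⁻ = inf {k ≥ 1 : S_k ≤ a}`. -/
def tauLe (X : ℕ → Ω → ℝ) (a : ℝ) (ω : Ω) : ℕ := sInf {k | 1 ≤ k ∧ pSum X k ω ≤ a}

/-- `τ₀⁺ = inf {k ≥ 1 : S_k > 0}`. -/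
def tauPos (X : ℕ → Ω → ℝ) (ω : Ω) : ℕ := sInf {k | 1 ≤ k ∧ 0 < pSum X k ω}

/-- `τ^{S̄ - S}_a = inf {k ≥ 1 : S̄_k - S_k ≥ a}`. -/
def tauDown (X : ℕ → Ω → ℝ) (a : ℝ) (ω : Ω) : ℕ :=
  sInf {k | 1 ≤ k ∧ a ≤ pMax X k ω - pSum X k ω}

/-- `H_j^S = ∑_{i=1}^j e^{S_i - S_j}`. -/
def HS (X : ℕ → Ω → ℝ) (j : ℕ) (ω : Ω) : ℝ :=
  ∑ i ∈ Finset.Icc 1 j, Real.exp (pSum X i ω - pSum X j ω)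

/-- Strict ascending ladder epochs. -/
def ladder (X : ℕ → Ω → ℝ) : ℕ → Ω → ℕ
  | 0 => fun _ => 0
  | (k + 1) => fun ω =>
      sInf {i | ladder X k ω < i ∧ pSum X (ladder X k ω) ω < pSum X i ω}

/-- `M(u) = P(sup_{s ≤ 1} 𝔪_s > u) = 2 ∑_{k ≥ 1} (-1)^{k+1} e^{-k² u² / 2}`. -/
def meanderTail (u : ℝ) : ℝ :=
  2 * ∑' k : ℕ, (-1 : ℝ) ^ k * Real.exp (-((k + 1 : ℝ) ^ 2 * u ^ 2) / 2)

/-- `f(u) = (2/√u) M(1/√(uσ²)) - (1/2) ∫_u^∞ y^{-3/2} M(1/√(yσ²)) dy`. -/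
def fBM (σ u : ℝ) : ℝ :=
  (2 / Real.sqrt u) * meanderTail (1 / Real.sqrt (u * σ ^ 2))
    - (1 / 2) * ∫ y in Set.Ioi u, y ^ (-(3 : ℝ) / 2) * meanderTail (1 / Real.sqrt (y * σ ^ 2))

/-- `ρ(c) = (cσ/√(2π)) ∫₀^∞ e^{-cσ²u/2} f(u) du`. -/
def rhoBM (σ c : ℝ) : ℝ :=
  (c * σ / Real.sqrt (2 * Real.pi)) *
    ∫ u in Set.Ioi (0 : ℝ), Real.exp (-(c * σ ^ 2 * u) / 2) * fBM σ u

end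

section FKGaux

lemma fkg_integrable_of_bounded {α : Type*} [MeasurableSpace α] (ν : Measure α)
    [IsProbabilityMeasure ν] {f : α → ℝ} (hf : Measurable f) {C : ℝ} (hC : ∀ x, |f x| ≤ C) :
    Integrable f ν := by
  refine (integrable_const C).mono' hf.aestronglyMeasurable ?_
  exact Filter.Eventually.of_forall fun x => by simpa using hC x

lemma fkg_abs_mul_le {α : Type*} {f g : α → ℝ} {C : ℝ} (hC : 0 ≤ C)
    (hfC : ∀ x, |f x| ≤ C) (hgC : ∀ x, |g x| ≤ C) : ∀ x, |f x * g x| ≤ C * C := by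
  intro x
  rw [abs_mul]
  exact mul_le_mul (hfC x) (hgC x) (abs_nonneg _) hC

/-- 1-d Chebyshev association (FKG on a linear order). -/
lemma fkg_linear {α : Type*} [MeasurableSpace α] [LinearOrder α] (ν : Measure α)
    [IsProbabilityMeasure ν] (f g : α → ℝ) (C : ℝ) (hC0 : 0 ≤ C)
    (hfm : Measurable f) (hgm : Measurable g)
    (hf : Monotone f) (hg : Monotone g) (hfC : ∀ x, |f x| ≤ C) (hgC : ∀ x, |g x| ≤ C) :
    (∫ x, f x ∂ν) * (∫ x, g x ∂ν) ≤ ∫ x, f x * g x ∂ν := by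
  set Pm := ν.prod ν with hπ
  have hint : ∀ (φ ψ : α → ℝ), Measurable φ → Measurable ψ → (∀ x, |φ x| ≤ C) →
      (∀ x, |ψ x| ≤ C) → Integrable (fun z : α × α => φ z.1 * ψ z.2) Pm := by
    intro φ ψ hφ hψ hφC hψC
    exact fkg_integrable_of_bounded Pm ((hφ.comp measurable_fst).mul (hψ.comp measurable_snd))
      (fun z => fkg_abs_mul_le hC0 (fun x => hφC x.1) (fun x => hψC x.2) z)
  have hfg : Integrable (fun x => f x * g x) ν :=
    fkg_integrable_of_bounded ν (hfm.mul hgm) (fkg_abs_mul_le hC0 hfC hgC)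
  have h1 : Integrable (fun z : α × α => f z.1 * g z.1) Pm := by
    exact fkg_integrable_of_bounded Pm ((hfm.comp measurable_fst).mul (hgm.comp measurable_fst))
      (fun z => fkg_abs_mul_le hC0 (fun x : α × α => hfC x.1) (fun x : α × α => hgC x.1) z)
  have h2 : Integrable (fun z : α × α => f z.2 * g z.2) Pm := by
    exact fkg_integrable_of_bounded Pm ((hfm.comp measurable_snd).mul (hgm.comp measurable_snd))
      (fun z => fkg_abs_mul_le hC0 (fun x : α × α => hfC x.2) (fun x : α × α => hgC x.2) z)
  have h3 : Integrable (fun z : α × α => f z.1 * g z.2) Pm := hint f g hfm hgm hfC hgC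
  have h4 : Integrable (fun z : α × α => f z.2 * g z.1) Pm := by
    have := hint g f hgm hfm hgC hfC
    simpa [mul_comm] using this
  have key : 0 ≤ ∫ z : α × α, (f z.1 - f z.2) * (g z.1 - g z.2) ∂Pm := by
    refine integral_nonneg fun z => ?_
    dsimp only
    rcases le_total z.1 z.2 with h | h
    · have h1 := hf h; have h2 := hg h
      have : (f z.1 - f z.2) * (g z.1 - g z.2)
          = (f z.2 - f z.1) * (g z.2 - g z.1) := by ring
      rw [this]
      exact mul_nonneg (sub_nonneg.2 h1) (sub_nonneg.2 h2)
    · have h1 := hf h; have h2 := hg h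
      exact mul_nonneg (sub_nonneg.2 h1) (sub_nonneg.2 h2)
  have expand : ∀ z : α × α, (f z.1 - f z.2) * (g z.1 - g z.2)
      = f z.1 * g z.1 + f z.2 * g z.2 - f z.1 * g z.2 - f z.2 * g z.1 := by
    intro z; ring
  rw [show (fun z : α × α => (f z.1 - f z.2) * (g z.1 - g z.2))
      = (fun z : α × α => f z.1 * g z.1 + f z.2 * g z.2 - f z.1 * g z.2 - f z.2 * g z.1)
      from funext expand] at key
  have s3 : ∫ z : α × α, (f z.1 * g z.1 + f z.2 * g z.2 - f z.1 * g z.2 - f z.2 * g z.1) ∂Pm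
      = ∫ z : α × α, (f z.1 * g z.1 + f z.2 * g z.2 - f z.1 * g z.2) ∂Pm
        - ∫ z : α × α, f z.2 * g z.1 ∂Pm :=
    integral_sub ((h1.add h2).sub h3) h4
  have s2 : ∫ z : α × α, (f z.1 * g z.1 + f z.2 * g z.2 - f z.1 * g z.2) ∂Pm
      = ∫ z : α × α, (f z.1 * g z.1 + f z.2 * g z.2) ∂Pm - ∫ z : α × α, f z.1 * g z.2 ∂Pm :=
    integral_sub (h1.add h2) h3
  have s1 : ∫ z : α × α, (f z.1 * g z.1 + f z.2 * g z.2) ∂Pm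
      = ∫ z : α × α, f z.1 * g z.1 ∂Pm + ∫ z : α × α, f z.2 * g z.2 ∂Pm :=
    integral_add h1 h2
  rw [s3, s2, s1] at key
  have e1 : ∫ z : α × α, f z.1 * g z.1 ∂Pm = ∫ x, f x * g x ∂ν := by
    rw [hπ, integral_prod _ h1]
    simp [integral_const]
  have e2 : ∫ z : α × α, f z.2 * g z.2 ∂Pm = ∫ x, f x * g x ∂ν := by
    rw [hπ, integral_prod _ h2]
    simp [integral_const]
  have e3 : ∫ z : α × α, f z.1 * g z.2 ∂Pm = (∫ x, f x ∂ν) * ∫ x, g x ∂ν := by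
    rw [hπ]; exact integral_prod_mul f g
  have e4 : ∫ z : α × α, f z.2 * g z.1 ∂Pm = (∫ x, g x ∂ν) * ∫ x, f x ∂ν := by
    rw [hπ, show (fun z : α × α => f z.2 * g z.1) = fun z : α × α => g z.1 * f z.2 from
      funext fun z => mul_comm _ _]
    exact integral_prod_mul g f
  rw [e1, e2, e3, e4] at key
  nlinarith [key]

/-- FKG extension to a product with one more real coordinate. -/
lemma fkg_prod {β : Type*} [MeasurableSpace β] [Preorder β] (ν : Measure ℝ) (ρ : Measure β)
    [IsProbabilityMeasure ν] [IsProbabilityMeasure ρ]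
    (hρ : ∀ (f g : β → ℝ) (C : ℝ), 0 ≤ C → Measurable f → Measurable g → Monotone f →
      Monotone g → (∀ x, |f x| ≤ C) → (∀ x, |g x| ≤ C) →
      (∫ x, f x ∂ρ) * (∫ x, g x ∂ρ) ≤ ∫ x, f x * g x ∂ρ)
    (f g : ℝ × β → ℝ) (C : ℝ) (hC0 : 0 ≤ C) (hfm : Measurable f) (hgm : Measurable g)
    (hf : Monotone f) (hg : Monotone g) (hfC : ∀ x, |f x| ≤ C) (hgC : ∀ x, |g x| ≤ C) :
    (∫ x, f x ∂(ν.prod ρ)) * (∫ x, g x ∂(ν.prod ρ)) ≤ ∫ x, f x * g x ∂(ν.prod ρ) := by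
  set F : ℝ → ℝ := fun t => ∫ b, f (t, b) ∂ρ with hF
  set G : ℝ → ℝ := fun t => ∫ b, g (t, b) ∂ρ with hG
  have hFm : Measurable F := (hfm.stronglyMeasurable.integral_prod_right').measurable
  have hGm : Measurable G := (hgm.stronglyMeasurable.integral_prod_right').measurable
  have hsecf : ∀ t : ℝ, Integrable (fun b => f (t, b)) ρ := fun t =>
    fkg_integrable_of_bounded ρ (hfm.comp measurable_prodMk_left) (fun b => hfC (t, b))
  have hsecg : ∀ t : ℝ, Integrable (fun b => g (t, b)) ρ := fun t =>
    fkg_integrable_of_bounded ρ (hgm.comp measurable_prodMk_left) (fun b => hgC (t, b))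
  have hFC : ∀ t, |F t| ≤ C := by
    intro t
    calc |F t| ≤ ∫ b, |f (t, b)| ∂ρ := by
          simpa only [Real.norm_eq_abs] using norm_integral_le_integral_norm (fun b => f (t, b)) (μ := ρ)
      _ ≤ ∫ _b, C ∂ρ := integral_mono (hsecf t).abs (integrable_const C)
            (fun b => hfC (t, b))
      _ = C := by simp
  have hGC : ∀ t, |G t| ≤ C := by
    intro t
    calc |G t| ≤ ∫ b, |g (t, b)| ∂ρ := by
          simpa only [Real.norm_eq_abs] using norm_integral_le_integral_norm (fun b => g (t, b)) (μ := ρ)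
      _ ≤ ∫ _b, C ∂ρ := integral_mono (hsecg t).abs (integrable_const C)
            (fun b => hgC (t, b))
      _ = C := by simp
  have hFmono : Monotone F := by
    intro t t' h
    exact integral_mono (hsecf t) (hsecf t') (fun b => hf (Prod.mk_le_mk.2 ⟨h, le_rfl⟩))
  have hGmono : Monotone G := by
    intro t t' h
    exact integral_mono (hsecg t) (hsecg t') (fun b => hg (Prod.mk_le_mk.2 ⟨h, le_rfl⟩))
  have hfgint : Integrable (fun x => f x * g x) (ν.prod ρ) :=
    fkg_integrable_of_bounded _ (hfm.mul hgm) (fkg_abs_mul_le hC0 hfC hgC)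
  have hfint : Integrable f (ν.prod ρ) := fkg_integrable_of_bounded _ hfm hfC
  have hgint : Integrable g (ν.prod ρ) := fkg_integrable_of_bounded _ hgm hgC
  have step1 : ∫ x, f x * g x ∂(ν.prod ρ) = ∫ t, (∫ b, f (t, b) * g (t, b) ∂ρ) ∂ν :=
    integral_prod _ hfgint
  have hsecfgm : Measurable fun t => ∫ b, f (t, b) * g (t, b) ∂ρ :=
    ((hfm.mul hgm).stronglyMeasurable.integral_prod_right').measurable
  have hinner : ∀ t, F t * G t ≤ ∫ b, f (t, b) * g (t, b) ∂ρ := by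
    intro t
    exact hρ (fun b => f (t, b)) (fun b => g (t, b)) C hC0
      (hfm.comp measurable_prodMk_left) (hgm.comp measurable_prodMk_left)
      (fun b b' h => hf (Prod.mk_le_mk.2 ⟨le_rfl, h⟩))
      (fun b b' h => hg (Prod.mk_le_mk.2 ⟨le_rfl, h⟩))
      (fun b => hfC (t, b)) (fun b => hgC (t, b))
  have step2 : ∫ t, F t * G t ∂ν ≤ ∫ t, (∫ b, f (t, b) * g (t, b) ∂ρ) ∂ν := by
    refine integral_mono (fkg_integrable_of_bounded ν (hFm.mul hGm)
      (fkg_abs_mul_le hC0 hFC hGC)) ?_ hinner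
    refine fkg_integrable_of_bounded ν hsecfgm (C := C * C) (fun t => ?_)
    calc |∫ b, f (t, b) * g (t, b) ∂ρ| ≤ ∫ b, |f (t, b) * g (t, b)| ∂ρ := by
          simpa only [Real.norm_eq_abs] using norm_integral_le_integral_norm (fun b => f (t, b) * g (t, b)) (μ := ρ)
      _ ≤ ∫ _b, C * C ∂ρ := by
          refine integral_mono ((fkg_integrable_of_bounded ρ
            ((hfm.comp measurable_prodMk_left).mul (hgm.comp measurable_prodMk_left))
            (fun b => fkg_abs_mul_le hC0 (fun b => hfC (t, b)) (fun b => hgC (t, b)) b)).abs)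
            (integrable_const _)
            (fun b => fkg_abs_mul_le hC0 (fun b => hfC (t, b)) (fun b => hgC (t, b)) b)
      _ = C * C := by simp
  have step3 : (∫ t, F t ∂ν) * (∫ t, G t ∂ν) ≤ ∫ t, F t * G t ∂ν :=
    fkg_linear ν F G C hC0 hFm hGm hFmono hGmono hFC hGC
  have ef : ∫ x, f x ∂(ν.prod ρ) = ∫ t, F t ∂ν := integral_prod _ hfint
  have eg : ∫ x, g x ∂(ν.prod ρ) = ∫ t, G t ∂ν := integral_prod _ hgint
  rw [step1, ef, eg]
  exact le_trans step3 step2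

end FKGaux

section FKGpi

/-- FKG inequality for finite products of probability measures on ℝ. -/
lemma fkg_pi : ∀ (n : ℕ) (ν : Fin n → Measure ℝ), (∀ i, IsProbabilityMeasure (ν i)) →
    ∀ (f g : (Fin n → ℝ) → ℝ) (C : ℝ), 0 ≤ C → Measurable f → Measurable g →
    Monotone f → Monotone g → (∀ x, |f x| ≤ C) → (∀ x, |g x| ≤ C) →
    (∫ x, f x ∂(Measure.pi ν)) * (∫ x, g x ∂(Measure.pi ν)) ≤
      ∫ x, f x * g x ∂(Measure.pi ν) := by
  intro n
  induction n with
  | zero =>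
    intro ν hprob f g C hC0 hfm hgm hf hg hfC hgC
    haveI : ∀ i, IsProbabilityMeasure (ν i) := hprob
    have hval : ∀ (h : (Fin 0 → ℝ) → ℝ), ∫ x, h x ∂(Measure.pi ν) = h default := by
      intro h
      rw [show h = fun _ => h default from funext fun x => congrArg h (Subsingleton.elim _ _)]
      simp
    rw [hval f, hval g, hval fun x => f x * g x]
  | succ n IH =>
    intro ν hprob f g C hC0 hfm hgm hf hg hfC hgC
    haveI : ∀ i, IsProbabilityMeasure (ν i) := hprob
    set e := MeasurableEquiv.piFinSuccAbove (fun _ : Fin (n + 1) => ℝ) (Fin.last n) with he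
    have mp := measurePreserving_piFinSuccAbove (fun i => ν i) (Fin.last n)
    set ρ := Measure.pi fun j : Fin n => ν ((Fin.last n).succAbove j) with hρ
    haveI : ∀ j : Fin n, IsProbabilityMeasure (ν ((Fin.last n).succAbove j)) :=
      fun j => hprob _
    haveI : IsProbabilityMeasure ρ := by rw [hρ]; infer_instance
    have hesymm : ∀ p : ℝ × (Fin n → ℝ), e.symm p = Fin.insertNth (Fin.last n) p.1 p.2 :=
      fun p => rfl
    have hmono : Monotone (e.symm : ℝ × (Fin n → ℝ) → (Fin (n + 1) → ℝ)) := by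
      intro p q hpq
      rw [hesymm, hesymm, Fin.insertNth_le_iff]
      constructor
      · rw [Fin.insertNth_apply_same]; exact hpq.1
      · intro j
        simpa using hpq.2 j
    have key := fkg_prod (ν (Fin.last n)) ρ
      (fun f' g' C' hC0' hf'm hg'm hf' hg' hf'C hg'C =>
        IH _ (fun j => hprob _) f' g' C' hC0' hf'm hg'm hf' hg' hf'C hg'C)
      (f ∘ e.symm) (g ∘ e.symm) C hC0
      (hfm.comp e.symm.measurable) (hgm.comp e.symm.measurable)
      (hf.comp hmono) (hg.comp hmono)
      (fun x => hfC _) (fun x => hgC _)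
    have tr : ∀ (h : (Fin (n + 1) → ℝ) → ℝ),
        ∫ y, (h ∘ e.symm) y ∂((ν (Fin.last n)).prod ρ) = ∫ x, h x ∂(Measure.pi ν) := by
      intro h
      have h1 := mp.integral_comp e.measurableEmbedding (h ∘ e.symm)
      rw [← h1]
      refine integral_congr_ae (Filter.Eventually.of_forall fun x => ?_)
      show h (e.symm (e x)) = h x
      rw [MeasurableEquiv.symm_apply_apply]
    rw [tr f, tr g] at key
    have tfg := tr fun x => f x * g x
    have : (fun x => f x * g x) ∘ e.symm
        = fun y => (f ∘ e.symm) y * (g ∘ e.symm) y := rfl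
    rw [this] at tfg
    rw [tfg] at key
    exact key

end FKGpi

lemma fin_sum_Iic {k : ℕ} (j : Fin k) (u : ℕ → ℝ) :
    ∑ i ∈ Finset.Iic j, u i.1 = ∑ i ∈ Finset.range (j.1 + 1), u i := by
  refine Finset.sum_nbij' (fun a => (a : ℕ)) (fun a => if h : a < k then ⟨a, h⟩ else j)
    ?_ ?_ ?_ ?_ ?_
  · intro a ha
    simp only [Finset.mem_range, Finset.mem_Iic] at *
    omega
  · intro a ha
    simp only [Finset.mem_range, Finset.mem_Iic] at *
    have hak : a < k := lt_of_lt_of_le ha (Nat.succ_le_of_lt j.2)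
    rw [dif_pos hak]
    exact Fin.mk_le_of_le_val (by omega)
  · intro a ha
    simp only [Finset.mem_Iic] at ha
    simp [a.2]
  · intro a ha
    simp only [Finset.mem_range] at ha
    have hak : a < k := lt_of_lt_of_le ha (Nat.succ_le_of_lt j.2)
    simp [hak]
  · intro a _; rfl

theorem fkg_partial_sums' {Ω : Type*} [MeasurableSpace Ω] (μ : Measure Ω) [IsProbabilityMeasure μ]
    (X : ℕ → Ω → ℝ) (hmeas : ∀ i, Measurable (X i))
    (hindep : iIndepFun X μ)
    (hident : ∀ i, IdentDistrib (X i) (X 0) μ μ)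
    (k : ℕ) (hk : 1 ≤ k) (f₁ f₂ : (Fin k → ℝ) → ℝ)
    (hf₁meas : Measurable f₁) (hf₂meas : Measurable f₂)
    (hf₁bdd : ∃ C, ∀ x, f₁ x ≤ C) (hf₂bdd : ∃ C, ∀ x, f₂ x ≤ C)
    (hf₁nonneg : ∀ x, 0 ≤ f₁ x) (hf₂nonneg : ∀ x, 0 ≤ f₂ x)
    (hmono₁ : Monotone fun u : Fin k → ℝ => f₁ fun j => ∑ i ∈ Finset.Iic j, u i)
    (hmono₂ : Monotone fun u : Fin k → ℝ => f₂ fun j => ∑ i ∈ Finset.Iic j, u i) :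
    (∫ ω, f₁ (fun j : Fin k => (∑ i ∈ Finset.range (j.1 + 1), X i ω)) ∂μ) *
        (∫ ω, f₂ (fun j : Fin k => (∑ i ∈ Finset.range (j.1 + 1), X i ω)) ∂μ) ≤
      ∫ ω, f₁ (fun j : Fin k => (∑ i ∈ Finset.range (j.1 + 1), X i ω)) *
        f₂ (fun j : Fin k => (∑ i ∈ Finset.range (j.1 + 1), X i ω)) ∂μ := by
  classical
  set ν : Measure ℝ := μ.map (X 0) with hν
  have hνP : IsProbabilityMeasure ν := Measure.isProbabilityMeasure_map (hmeas 0).aemeasurable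
  haveI := hνP
  set Y : Ω → (Fin k → ℝ) := fun ω i => X i ω with hY
  have hYm : Measurable Y := measurable_pi_lambda _ fun i => hmeas i
  have hmap : μ.map Y = Measure.pi (fun _ : Fin k => ν) := by
    refine (Measure.pi_eq (μ := fun _ : Fin k => ν) fun t ht => ?_).symm
    rw [Measure.map_apply hYm (MeasurableSet.univ_pi ht)]
    have hpre : Y ⁻¹' Set.pi Set.univ t
        = ⋂ j ∈ Finset.range k, X j ⁻¹' (if h : j < k then t ⟨j, h⟩ else Set.univ) := by
      ext ω
      simp only [Set.mem_preimage, Set.mem_pi, Set.mem_univ, true_implies, Set.mem_iInter,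
        Finset.mem_range]
      constructor
      · intro hω j hj
        simp only [dif_pos hj, Set.mem_preimage]
        exact hω ⟨j, hj⟩
      · intro hω i
        have := hω i.1 i.2
        simpa [i.2] using this
    rw [hpre, hindep.meas_biInter (fun j _ =>
      ⟨if h : j < k then t ⟨j, h⟩ else Set.univ, by
        split
        · exact ht _
        · exact MeasurableSet.univ, rfl⟩)]
    have hconv : ∏ j ∈ Finset.range k,
        μ (X j ⁻¹' (if h : j < k then t ⟨j, h⟩ else Set.univ))
        = ∏ i : Fin k, μ (X i.1 ⁻¹' t i) := by
      rw [← Fin.prod_univ_eq_prod_range]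
      refine Finset.prod_congr rfl fun i _ => ?_
      simp [i.2]
    rw [hconv]
    refine Finset.prod_congr rfl fun i _ => ?_
    rw [hν, ← (hident i.1).map_eq, Measure.map_apply (hmeas i.1) (ht i)]
  set T : (Fin k → ℝ) → (Fin k → ℝ) := fun u j => ∑ i ∈ Finset.Iic j, u i with hT
  have hTm : Measurable T := measurable_pi_lambda _ fun j =>
    Finset.measurable_sum _ fun i _ => measurable_pi_apply i
  have hcomp : ∀ ω, (fun j : Fin k => ∑ i ∈ Finset.range (j.1 + 1), X i ω) = T (Y ω) := by
    intro ω; funext j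
    exact (fin_sum_Iic j fun i => X i ω).symm
  obtain ⟨C₁, hC₁⟩ := hf₁bdd
  obtain ⟨C₂, hC₂⟩ := hf₂bdd
  set C := max C₁ C₂ with hC
  have hC0 : 0 ≤ C := le_trans (le_trans (hf₁nonneg fun _ => 0) (hC₁ _)) (le_max_left _ _)
  have habs₁ : ∀ x, |f₁ (T x)| ≤ C := fun x => by
    rw [abs_of_nonneg (hf₁nonneg _)]; exact le_trans (hC₁ _) (le_max_left _ _)
  have habs₂ : ∀ x, |f₂ (T x)| ≤ C := fun x => by
    rw [abs_of_nonneg (hf₂nonneg _)]; exact le_trans (hC₂ _) (le_max_right _ _)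
  have main := fkg_pi k (fun _ => ν) (fun _ => hνP) (f₁ ∘ T) (f₂ ∘ T) C hC0
    (hf₁meas.comp hTm) (hf₂meas.comp hTm) hmono₁ hmono₂ habs₁ habs₂
  have tint : ∀ (F : (Fin k → ℝ) → ℝ), Measurable F →
      ∫ ω, F (Y ω) ∂μ = ∫ u, F u ∂(Measure.pi fun _ : Fin k => ν) := by
    intro F hF
    rw [← hmap, integral_map hYm.aemeasurable hF.aestronglyMeasurable]
  have e₁ : ∫ ω, f₁ (fun j : Fin k => ∑ i ∈ Finset.range (j.1 + 1), X i ω) ∂μ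
      = ∫ u, (f₁ ∘ T) u ∂(Measure.pi fun _ : Fin k => ν) := by
    rw [show (fun ω => f₁ fun j : Fin k => ∑ i ∈ Finset.range (j.1 + 1), X i ω)
        = fun ω => (f₁ ∘ T) (Y ω) from funext fun ω => by rw [hcomp ω]; rfl]
    exact tint (f₁ ∘ T) (hf₁meas.comp hTm)
  have e₂ : ∫ ω, f₂ (fun j : Fin k => ∑ i ∈ Finset.range (j.1 + 1), X i ω) ∂μ
      = ∫ u, (f₂ ∘ T) u ∂(Measure.pi fun _ : Fin k => ν) := by
    rw [show (fun ω => f₂ fun j : Fin k => ∑ i ∈ Finset.range (j.1 + 1), X i ω)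
        = fun ω => (f₂ ∘ T) (Y ω) from funext fun ω => by rw [hcomp ω]; rfl]
    exact tint (f₂ ∘ T) (hf₂meas.comp hTm)
  have e₁₂ : ∫ ω, f₁ (fun j : Fin k => ∑ i ∈ Finset.range (j.1 + 1), X i ω)
        * f₂ (fun j : Fin k => ∑ i ∈ Finset.range (j.1 + 1), X i ω) ∂μ
      = ∫ u, (f₁ ∘ T) u * (f₂ ∘ T) u ∂(Measure.pi fun _ : Fin k => ν) := by
    rw [show (fun ω => f₁ (fun j : Fin k => ∑ i ∈ Finset.range (j.1 + 1), X i ω)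
          * f₂ (fun j : Fin k => ∑ i ∈ Finset.range (j.1 + 1), X i ω))
        = fun ω => (fun u => (f₁ ∘ T) u * (f₂ ∘ T) u) (Y ω) from
        funext fun ω => by rw [hcomp ω]; rfl]
    exact tint _ ((hf₁meas.comp hTm).mul (hf₂meas.comp hTm))
  rw [e₁, e₂, e₁₂]
  exact main


theorem fkg_partial_sums {Ω : Type*} [MeasurableSpace Ω] (μ : Measure Ω) [IsProbabilityMeasure μ]
    (X : ℕ → Ω → ℝ) (hmeas : ∀ i, Measurable (X i))
    (hindep : iIndepFun X μ)
    (hident : ∀ i, IdentDistrib (X i) (X 0) μ μ)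
    (k : ℕ) (hk : 1 ≤ k) (f₁ f₂ : (Fin k → ℝ) → ℝ)
    (hf₁meas : Measurable f₁) (hf₂meas : Measurable f₂)
    (hf₁bdd : ∃ C, ∀ x, f₁ x ≤ C) (hf₂bdd : ∃ C, ∀ x, f₂ x ≤ C)
    (hf₁nonneg : ∀ x, 0 ≤ f₁ x) (hf₂nonneg : ∀ x, 0 ≤ f₂ x)
    (hmono₁ : Monotone fun u : Fin k → ℝ => f₁ fun j => ∑ i ∈ Finset.Iic j, u i)
    (hmono₂ : Monotone fun u : Fin k → ℝ => f₂ fun j => ∑ i ∈ Finset.Iic j, u i) :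
    (∫ ω, f₁ (fun j : Fin k => pSum X (j.1 + 1) ω) ∂μ) *
        (∫ ω, f₂ (fun j : Fin k => pSum X (j.1 + 1) ω) ∂μ) ≤
      ∫ ω, f₁ (fun j : Fin k => pSum X (j.1 + 1) ω) *
        f₂ (fun j : Fin k => pSum X (j.1 + 1) ω) ∂μ := by
  simp only [pSum]
  exact fkg_partial_sums' μ X hmeas hindep hident k hk f₁ f₂ hf₁meas hf₂meas hf₁bdd hf₂bdd
    hf₁nonneg hf₂nonneg hmono₁ hmono₂
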